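/- For every probability vector μ on 𝒳, the relative entropy is controlled by the total variation distance: d_KL(μ,π) ≤ ( (1/(1−p)) log(1/p) ) · d_TV(μ,π), where p = min_x π(x) (note p < 1 since |𝒳| ≥ 2). In particular, d_KL(t) ≤ ((1/(1−p)) log(1/p)) · d_TV(t) for all t ≥ 0. -/

import Mathlib

open scoped Classical

noncomputable section

/-- `n`-th power of a kernel `K` on a finite set. -/
def matPow {X : Type*} [Fintype X] [DecidableEq X] (K : X → X → ℝ) : ℕ → X → X → ℝ
  | 0 => fun x y => if x = y then 1 else 0
  | n + 1 => fun x y => ∑ z, matPow K n x z * K z y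

/-- `K` is a stochastic matrix with entries in `[0,1]` and rows summing to `1`. -/
def IsStochastic {X : Type*} [Fintype X] (K : X → X → ℝ) : Prop :=
  (∀ x y, 0 ≤ K x y ∧ K x y ≤ 1) ∧ ∀ x, ∑ y, K x y = 1

/-- Irreducibility: any state can be reached from any state. -/
def IsIrreducibleMatrix {X : Type*} [Fintype X] [DecidableEq X] (K : X → X → ℝ) : Prop :=
  ∀ x y, ∃ n : ℕ, 0 < matPow K n x y

/-- `π` is the (positive) stationary probability vector of `K`. -/
def IsStationaryVec {X : Type*} [Fintype X] (K : X → X → ℝ) (π : X → ℝ) : Prop :=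
  (∀ x, 0 < π x) ∧ (∑ x, π x = 1) ∧ ∀ y, ∑ x, π x * K x y = π y

/-- A probability vector on a finite set. -/
def IsProbVector {X : Type*} [Fintype X] (μ : X → ℝ) : Prop :=
  (∀ x, 0 ≤ μ x) ∧ ∑ x, μ x = 1

/-- Continuous-time heat kernel `P_t(x,y) = e^{-t} ∑ t^n/n! Kⁿ(x,y)`. -/
def heatKernel {X : Type*} [Fintype X] [DecidableEq X] (K : X → X → ℝ) (t : ℝ) (x y : X) : ℝ :=
  Real.exp (-t) * ∑' n : ℕ, t ^ n / (Nat.factorial n : ℝ) * matPow K n x y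

/-- Total variation distance between two vectors. -/
def dTV {X : Type*} [Fintype X] (μ ν : X → ℝ) : ℝ := (∑ x, |μ x - ν x|) / 2

/-- Relative entropy (Kullback–Leibler divergence). -/
def dKL {X : Type*} [Fintype X] (μ ν : X → ℝ) : ℝ := ∑ x, μ x * Real.log (μ x / ν x)

/-- Varentropy. -/
def varKL {X : Type*} [Fintype X] (μ ν : X → ℝ) : ℝ :=
  ∑ x, μ x * (Real.log (μ x / ν x) - dKL μ ν) ^ 2

/-- Worst-case total variation distance to equilibrium at time `t`. -/
def worstTV {X : Type*} [Fintype X] [DecidableEq X] (K : X → X → ℝ) (π : X → ℝ) (t : ℝ) : ℝ :=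
  sSup {v : ℝ | ∃ o : X, v = dTV (heatKernel K t o) π}

/-- Worst-case relative entropy to equilibrium at time `t`. -/
def worstKL {X : Type*} [Fintype X] [DecidableEq X] (K : X → X → ℝ) (π : X → ℝ) (t : ℝ) : ℝ :=
  sSup {v : ℝ | ∃ o : X, v = dKL (heatKernel K t o) π}

/-- Worst-case varentropy at time `t`. -/
def worstVar {X : Type*} [Fintype X] [DecidableEq X] (K : X → X → ℝ) (π : X → ℝ) (t : ℝ) : ℝ :=
  sSup {v : ℝ | ∃ o : X, v = varKL (heatKernel K t o) π}

/-- Mixing time: first time the worst-case TV distance drops below `ε`. -/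
def mixingTime {X : Type*} [Fintype X] [DecidableEq X] (K : X → X → ℝ) (π : X → ℝ) (ε : ℝ) : ℝ :=
  sInf {t : ℝ | 0 ≤ t ∧ worstTV K π t ≤ ε}

/-- Variance of `f` with respect to `π`. -/
def varPi {X : Type*} [Fintype X] (π f : X → ℝ) : ℝ :=
  ∑ x, π x * (f x - ∑ y, π y * f y) ^ 2

/-- Poincaré constant: the largest `γ` with `γ·Var_π(f) ≤ (1/2)∑ π(x)K(x,y)(f(x)-f(y))²`. -/
def poincare {X : Type*} [Fintype X] (K : X → X → ℝ) (π : X → ℝ) : ℝ :=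
  sSup {γ : ℝ | ∀ f : X → ℝ, γ * varPi π f ≤ (∑ x, ∑ y, π x * K x y * (f x - f y) ^ 2) / 2}

/-- Smallest non-zero entry of `K`. -/
def minEntry {X : Type*} [Fintype X] (K : X → X → ℝ) : ℝ :=
  sInf {v : ℝ | (∃ x y, v = K x y) ∧ 0 < v}

/-- Smallest stationary probability `p = min_x π(x)`. -/
def statMin {X : Type*} [Fintype X] (π : X → ℝ) : ℝ :=
  sInf {v : ℝ | ∃ x, v = π x}

/-- The support of `K` is symmetric. -/
def SymmSupport {X : Type*} (K : X → X → ℝ) : Prop :=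
  ∀ x y, 0 < K x y → 0 < K y x

/-- Graph distance associated with the support of `K`. -/
def mdist {X : Type*} [Fintype X] [DecidableEq X] (K : X → X → ℝ) (x y : X) : ℕ :=
  sInf {n : ℕ | 0 < matPow K n x y}

/-- Diameter of the state space for the distance `mdist`. -/
def mdiam {X : Type*} [Fintype X] [DecidableEq X] (K : X → X → ℝ) : ℕ :=
  Finset.sup Finset.univ fun p : X × X => mdist K p.1 p.2

/-- Lipschitz norm of `f` with respect to `mdist`. -/
def lipNorm {X : Type*} [Fintype X] [DecidableEq X] (K : X → X → ℝ) (f : X → ℝ) : ℝ :=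
  sSup {v : ℝ | ∃ x y, x ≠ y ∧ v = |f x - f y| / (mdist K x y : ℝ)}


section Aux

variable {X : Type*} [Fintype X]

lemma matPow_nonneg [DecidableEq X] {K : X → X → ℝ} (hK : IsStochastic K) :
    ∀ (n : ℕ) (x y : X), 0 ≤ matPow K n x y := by
  intro n
  induction n with
  | zero => intro x y; simp only [matPow]; split <;> norm_num
  | succ n ih =>
    intro x y
    exact Finset.sum_nonneg fun z _ => mul_nonneg (ih x z) (hK.1 z y).1

lemma matPow_rowsum [DecidableEq X] {K : X → X → ℝ} (hK : IsStochastic K) :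
    ∀ (n : ℕ) (x : X), ∑ y, matPow K n x y = 1 := by
  intro n
  induction n with
  | zero => intro x; simp [matPow]
  | succ n ih =>
    intro x
    simp only [matPow]
    rw [Finset.sum_comm]
    have h1 : ∀ z : X, ∑ y, matPow K n x z * K z y = matPow K n x z := by
      intro z; rw [← Finset.mul_sum, hK.2 z, mul_one]
    rw [Finset.sum_congr rfl fun z _ => h1 z]
    exact ih x

lemma matPow_le_one [DecidableEq X] {K : X → X → ℝ} (hK : IsStochastic K)
    (n : ℕ) (x y : X) : matPow K n x y ≤ 1 := by
  have := Finset.single_le_sum (f := fun y => matPow K n x y)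
    (fun i _ => matPow_nonneg hK n x i) (Finset.mem_univ y)
  rwa [matPow_rowsum hK n x] at this

lemma statMin_spec [Nonempty X] (π : X → ℝ) :
    (∃ x, statMin π = π x) ∧ ∀ x, statMin π ≤ π x := by
  have hS : {v : ℝ | ∃ x, v = π x} = Set.range π := by
    ext v; simp only [Set.mem_setOf_eq, Set.mem_range]; exact exists_congr fun x => eq_comm
  have hfin : ({v : ℝ | ∃ x, v = π x}).Finite := by rw [hS]; exact Set.finite_range π
  have hne : ({v : ℝ | ∃ x, v = π x}).Nonempty :=
    ⟨π (Classical.arbitrary X), ⟨Classical.arbitrary X, rfl⟩⟩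
  constructor
  · exact hne.csInf_mem hfin
  · intro x
    exact csInf_le hfin.bddBelow ⟨x, rfl⟩

/-- Convexity consequence: `a * log a ≤ ((1-a)/(1-b)) * (b * log b)` for `b ≤ a ≤ 1`. -/
lemma mul_log_le_aux {a b : ℝ} (hb0 : 0 < b) (hb1 : b < 1) (hba : b ≤ a) (ha1 : a ≤ 1) :
    a * Real.log a ≤ (1 - a) / (1 - b) * (b * Real.log b) := by
  have h1b : (0:ℝ) < 1 - b := by linarith
  set s : ℝ := (1 - a) / (1 - b) with hs
  set t : ℝ := (a - b) / (1 - b) with ht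
  have hs0 : 0 ≤ s := div_nonneg (by linarith) (le_of_lt h1b)
  have ht0 : 0 ≤ t := div_nonneg (by linarith) (le_of_lt h1b)
  have hne : (1:ℝ) - b ≠ 0 := ne_of_gt h1b
  have hst : s + t = 1 := by
    rw [hs, ht, ← add_div, div_eq_one_iff_eq hne]; ring
  have hcomb : s * b + t = a := by
    rw [hs, ht, div_mul_eq_mul_div, ← add_div, eq_comm, eq_div_iff hne]; ring
  have hst' : s + t * 1 = 1 := by rw [mul_one]; exact hst
  have h := Real.convexOn_mul_log.2 (Set.mem_Ici.mpr (le_of_lt hb0))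
    (Set.mem_Ici.mpr (zero_le_one)) hs0 ht0 hst
  simp only [smul_eq_mul, mul_one, Real.log_one, mul_zero, add_zero] at h
  rw [hcomb] at h
  linarith [h]

/-- Concavity of log: `-log b ≤ ((1-b)/(1-p)) * (-log p)` for `0 < p ≤ b < 1`. -/
lemma neg_log_le_aux {p b : ℝ} (hp0 : 0 < p) (hpb : p ≤ b) (hb1 : b < 1) :
    -Real.log b ≤ (1 - b) / (1 - p) * (-Real.log p) := by
  have hp1 : p < 1 := lt_of_le_of_lt hpb hb1
  have h1p : (0:ℝ) < 1 - p := by linarith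
  set s : ℝ := (1 - b) / (1 - p) with hs
  set t : ℝ := (b - p) / (1 - p) with ht
  have hs0 : 0 ≤ s := div_nonneg (by linarith) (le_of_lt h1p)
  have ht0 : 0 ≤ t := div_nonneg (by linarith) (le_of_lt h1p)
  have hne : (1:ℝ) - p ≠ 0 := ne_of_gt h1p
  have hst : s + t = 1 := by
    rw [hs, ht, ← add_div, div_eq_one_iff_eq hne]; ring
  have hcomb : s * p + t = b := by
    rw [hs, ht, div_mul_eq_mul_div, ← add_div, eq_comm, eq_div_iff hne]; ring
  have h := strictConcaveOn_log_Ioi.concaveOn.2 (Set.mem_Ioi.mpr hp0)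
    (Set.mem_Ioi.mpr one_pos) hs0 ht0 hst
  simp only [smul_eq_mul, mul_one, Real.log_one, mul_zero, add_zero] at h
  rw [hcomb] at h
  linarith [h]

/-- The pointwise reversed-Pinsker bound. -/
lemma pointwise_bound {p a b : ℝ} (hp0 : 0 < p) (hp1 : p < 1) (ha0 : 0 ≤ a) (ha1 : a ≤ 1)
    (hpb : p ≤ b) :
    a * Real.log (a / b) ≤ 1 / (1 - p) * Real.log (1 / p) * max (a - b) 0 := by
  have hb0 : 0 < b := lt_of_lt_of_le hp0 hpb
  have hC : 0 ≤ 1 / (1 - p) * Real.log (1 / p) := by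
    apply mul_nonneg (div_nonneg zero_le_one (by linarith))
    apply Real.log_nonneg
    rw [le_div_iff₀ hp0]; linarith
  rcases le_or_gt a b with hab | hab
  · have hmax : max (a - b) 0 = 0 := max_eq_right (by linarith)
    rw [hmax, mul_zero]
    apply mul_nonpos_of_nonneg_of_nonpos ha0
    apply Real.log_nonpos (by positivity)
    rw [div_le_one hb0]; exact hab
  · have hb1 : b < 1 := lt_of_lt_of_le hab ha1
    have h1b : (0:ℝ) < 1 - b := by linarith
    have hmax : max (a - b) 0 = a - b := max_eq_left (by linarith)
    rw [hmax]
    have hkey : a * Real.log (a / b) ≤ (a - b) / (1 - b) * (-Real.log b) := by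
      rw [Real.log_div (by linarith) (ne_of_gt hb0)]
      have h1 := mul_log_le_aux hb0 hb1 (le_of_lt hab) ha1
      have : a * (Real.log a - Real.log b) = a * Real.log a - a * Real.log b := by ring
      rw [this]
      have h2 : (1 - a) / (1 - b) * (b * Real.log b) - a * Real.log b
          = (a - b) / (1 - b) * (-Real.log b) := by
        field_simp; ring
      linarith [h1]
    have hkey2 : (a - b) / (1 - b) * (-Real.log b)
        ≤ (a - b) / (1 - b) * ((1 - b) / (1 - p) * (-Real.log p)) := by
      apply mul_le_mul_of_nonneg_left (neg_log_le_aux hp0 hpb hb1)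
      exact div_nonneg (by linarith) (le_of_lt h1b)
    have hne1 : (1:ℝ) - b ≠ 0 := ne_of_gt h1b
    have heq : (a - b) / (1 - b) * ((1 - b) / (1 - p) * (-Real.log p))
        = 1 / (1 - p) * Real.log (1 / p) * (a - b) := by
      rw [Real.log_div one_ne_zero (ne_of_gt hp0), Real.log_one, zero_sub]
      have h3 : (a - b) / (1 - b) * ((1 - b) / (1 - p) * (-Real.log p))
          = (a - b) * ((1 - b) / (1 - b)) * (1 / (1 - p) * (-Real.log p)) := by ring
      rw [h3, div_self hne1]
      ring
    have hfin : a * Real.log (a / b) ≤ 1 / (1 - p) * Real.log (1 / p) * (a - b) := by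
      rw [← heq]; exact le_trans hkey hkey2
    exact hfin

/-- The reversed Pinsker inequality for a probability vector. -/
lemma revPinsker [Nonempty X] {π : X → ℝ} (hπpos : ∀ x, 0 < π x) (hπsum : ∑ x, π x = 1)
    (hp1 : statMin π < 1)
    {μ : X → ℝ} (hμ : IsProbVector μ) :
    dKL μ π ≤ 1 / (1 - statMin π) * Real.log (1 / statMin π) * dTV μ π := by
  obtain ⟨⟨x₀, hx₀⟩, hle⟩ := statMin_spec π
  have hp0 : 0 < statMin π := hx₀ ▸ hπpos x₀
  set p := statMin π
  set C := 1 / (1 - p) * Real.log (1 / p) with hC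
  have hμ1 : ∀ x, μ x ≤ 1 := by
    intro x
    calc μ x ≤ ∑ y, μ y := Finset.single_le_sum (fun i _ => hμ.1 i) (Finset.mem_univ x)
    _ = 1 := hμ.2
  have hpt : ∀ x, μ x * Real.log (μ x / π x) ≤ C * max (μ x - π x) 0 := fun x =>
    pointwise_bound hp0 hp1 (hμ.1 x) (hμ1 x) (hle x)
  have hsum : ∑ x, max (μ x - π x) 0 = (∑ x, |μ x - π x|) / 2 := by
    have h : ∀ z : ℝ, max z 0 = (z + |z|) / 2 := by
      intro z
      rcases le_or_gt 0 z with hz | hz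
      · rw [max_eq_left hz, abs_of_nonneg hz]; ring
      · rw [max_eq_right (le_of_lt hz), abs_of_neg hz]; ring
    rw [Finset.sum_congr rfl fun x _ => h (μ x - π x)]
    rw [← Finset.sum_div, Finset.sum_add_distrib, Finset.sum_sub_distrib, hμ.2, hπsum]
    ring_nf
  calc dKL μ π = ∑ x, μ x * Real.log (μ x / π x) := rfl
    _ ≤ ∑ x, C * max (μ x - π x) 0 := Finset.sum_le_sum fun x _ => hpt x
    _ = C * ∑ x, max (μ x - π x) 0 := by rw [Finset.mul_sum]
    _ = C * dTV μ π := by rw [hsum]; rfl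

lemma heatKernel_summable [DecidableEq X] {K : X → X → ℝ} (hK : IsStochastic K)
    {t : ℝ} (ht : 0 ≤ t) (o y : X) :
    Summable (fun n : ℕ => t ^ n / (Nat.factorial n : ℝ) * matPow K n o y) := by
  apply Summable.of_nonneg_of_le
    (fun n => mul_nonneg (by positivity) (matPow_nonneg hK n o y))
    (fun n => ?_) (Real.summable_pow_div_factorial t)
  calc t ^ n / (Nat.factorial n : ℝ) * matPow K n o y
      ≤ t ^ n / (Nat.factorial n : ℝ) * 1 :=
        mul_le_mul_of_nonneg_left (matPow_le_one hK n o y) (by positivity)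
    _ = t ^ n / (Nat.factorial n : ℝ) := mul_one _

lemma heatKernel_prob [DecidableEq X] {K : X → X → ℝ} (hK : IsStochastic K)
    {t : ℝ} (ht : 0 ≤ t) (o : X) : IsProbVector (heatKernel K t o) := by
  constructor
  · intro y
    apply mul_nonneg (le_of_lt (Real.exp_pos _))
    exact tsum_nonneg fun n => mul_nonneg (by positivity) (matPow_nonneg hK n o y)
  · have hswap : ∑ y, ∑' n : ℕ, t ^ n / (Nat.factorial n : ℝ) * matPow K n o y
        = ∑' n : ℕ, ∑ y, t ^ n / (Nat.factorial n : ℝ) * matPow K n o y :=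
      (Summable.tsum_finsetSum fun y _ => heatKernel_summable hK ht o y).symm
    have hinner : ∀ n : ℕ, ∑ y, t ^ n / (Nat.factorial n : ℝ) * matPow K n o y
        = t ^ n / (Nat.factorial n : ℝ) := by
      intro n
      rw [← Finset.mul_sum, matPow_rowsum hK n o, mul_one]
    have hexp : (∑' n : ℕ, t ^ n / (Nat.factorial n : ℝ)) = Real.exp t := by
      rw [Real.exp_eq_exp_ℝ, NormedSpace.exp_eq_tsum_div]
    calc ∑ y, heatKernel K t o y
        = Real.exp (-t) * ∑ y, ∑' n : ℕ, t ^ n / (Nat.factorial n : ℝ) * matPow K n o y := by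
          rw [Finset.mul_sum]; rfl
      _ = Real.exp (-t) * ∑' n : ℕ, ∑ y, t ^ n / (Nat.factorial n : ℝ) * matPow K n o y := by
          rw [hswap]
      _ = Real.exp (-t) * Real.exp t := by rw [tsum_congr hinner, hexp]
      _ = 1 := by rw [← Real.exp_add]; simp

end Aux

/-- Reversed Pinsker inequality. -/
theorem stmt_11 {X : Type*} [Fintype X] [DecidableEq X]
    (hcard : 2 ≤ Fintype.card X)
    (K : X → X → ℝ) (π : X → ℝ)
    (hK : IsStochastic K) (hirr : IsIrreducibleMatrix K) (hπ : IsStationaryVec K π) :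
    (∀ μ : X → ℝ, IsProbVector μ →
      dKL μ π ≤ 1 / (1 - statMin π) * Real.log (1 / statMin π) * dTV μ π) ∧
    ∀ t : ℝ, 0 ≤ t →
      worstKL K π t ≤ 1 / (1 - statMin π) * Real.log (1 / statMin π) * worstTV K π t := by
  haveI hXne : Nonempty X := Fintype.card_pos_iff.mp (by omega)
  obtain ⟨⟨x₀, hx₀⟩, hle⟩ := statMin_spec π
  have hπpos := hπ.1
  have hπsum := hπ.2.1
  have hp0 : 0 < statMin π := hx₀ ▸ hπpos x₀
  have hp1 : statMin π < 1 := by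
    obtain ⟨y, hy⟩ := Fintype.exists_ne_of_one_lt_card (by omega) x₀
    have hsub : ({x₀, y} : Finset X) ⊆ Finset.univ := Finset.subset_univ _
    have hpair : ∑ x ∈ ({x₀, y} : Finset X), π x = π x₀ + π y :=
      Finset.sum_pair (Ne.symm hy)
    have hlesum : ∑ x ∈ ({x₀, y} : Finset X), π x ≤ ∑ x, π x :=
      Finset.sum_le_sum_of_subset_of_nonneg hsub fun i _ _ => le_of_lt (hπpos i)
    rw [hpair, hπsum] at hlesum
    have := hπpos y
    rw [hx₀]
    linarith
  have hmain : ∀ μ : X → ℝ, IsProbVector μ →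
      dKL μ π ≤ 1 / (1 - statMin π) * Real.log (1 / statMin π) * dTV μ π :=
    fun μ hμ => revPinsker hπpos hπsum hp1 hμ
  refine ⟨hmain, fun t ht => ?_⟩
  have hC : 0 ≤ 1 / (1 - statMin π) * Real.log (1 / statMin π) := by
    apply mul_nonneg (div_nonneg zero_le_one (by linarith))
    apply Real.log_nonneg
    rw [le_div_iff₀ hp0]; linarith
  -- the TV set
  have hTVset : {v : ℝ | ∃ o : X, v = dTV (heatKernel K t o) π}
      = Set.range (fun o : X => dTV (heatKernel K t o) π) := by
    ext v; simp only [Set.mem_setOf_eq, Set.mem_range]; exact exists_congr fun o => eq_comm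
  have hTVfin : ({v : ℝ | ∃ o : X, v = dTV (heatKernel K t o) π}).Finite := by
    rw [hTVset]; exact Set.finite_range _
  have hTVle : ∀ o : X, dTV (heatKernel K t o) π ≤ worstTV K π t := by
    intro o
    exact le_csSup hTVfin.bddAbove ⟨o, rfl⟩
  have hKLset : {v : ℝ | ∃ o : X, v = dKL (heatKernel K t o) π}
      = Set.range (fun o : X => dKL (heatKernel K t o) π) := by
    ext v; simp only [Set.mem_setOf_eq, Set.mem_range]; exact exists_congr fun o => eq_comm
  have hKLne : ({v : ℝ | ∃ o : X, v = dKL (heatKernel K t o) π}).Nonempty :=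
    ⟨dKL (heatKernel K t (Classical.arbitrary X)) π, ⟨Classical.arbitrary X, rfl⟩⟩
  apply csSup_le hKLne
  rintro v ⟨o, rfl⟩
  calc dKL (heatKernel K t o) π
      ≤ 1 / (1 - statMin π) * Real.log (1 / statMin π) * dTV (heatKernel K t o) π :=
        hmain _ (heatKernel_prob hK ht o)
    _ ≤ 1 / (1 - statMin π) * Real.log (1 / statMin π) * worstTV K π t :=
        mul_le_mul_of_nonneg_left (hTVle o) hC
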